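/- With delta_g^{(2c)} defined by delta_1^{(2c)} = d-c and delta_{g+1}^{(2c)} = sum_{a=0}^{d-1}(d - max(a,c)) delta_g^{(2a)}, and with p = 2d+1, one has delta_4^{(0)} = (p-1)p(p+1)(17p^4 + 31p^2 + 24)/40320. -/

import Mathlib

/-- `delta d g c` is `δ_g^{(2c)}` for `p = 2d+1`, with `δ_0^{(0)} = 1`, `δ_0^{(2c)} = 0` for
`c ≠ 0`, and `δ_{g+1}^{(2c)} = ∑_{a=0}^{d-1} (d - max a c) δ_g^{(2a)}`; in particular
`δ_1^{(2c)} = d - c`. -/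
def delta (d : ℕ) : ℕ → ℕ → ℚ
  | 0, c => if c = 0 then 1 else 0
  | g + 1, c => ∑ a ∈ Finset.range d, ((d : ℚ) - max a c) * delta d g a

lemma delta_succ (d g c : ℕ) :
    delta d (g + 1) c = ∑ a ∈ Finset.range d, ((d : ℚ) - max a c) * delta d g a := rfl

lemma delta_split (d : ℕ) (f : ℕ → ℚ) {c : ℕ} (hc : c ≤ d) :
    ∑ a ∈ Finset.range d, ((d : ℚ) - max a c) * f a
      = ((d : ℚ) - c) * (∑ a ∈ Finset.range c, f a)
        + ((∑ a ∈ Finset.range d, ((d : ℚ) - a) * f a)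
            - ∑ a ∈ Finset.range c, ((d : ℚ) - a) * f a) := by
  have key : ∑ a ∈ Finset.range d, ((d : ℚ) - max a c) * f a
      = (∑ a ∈ Finset.range c, ((d : ℚ) - c) * f a)
        + ∑ a ∈ Finset.Ico c d, ((d : ℚ) - a) * f a := by
    rw [Finset.range_eq_Ico, ← Finset.sum_Ico_consecutive _ (Nat.zero_le c) hc,
      ← Finset.range_eq_Ico]
    congr 1
    · exact Finset.sum_congr rfl fun a ha => by
        rw [max_eq_right (le_of_lt (Finset.mem_range.mp ha))]
    · exact Finset.sum_congr rfl fun a ha => by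
        rw [max_eq_left (Finset.mem_Ico.mp ha).1]
  rw [key, Finset.sum_Ico_eq_sub _ hc, ← Finset.mul_sum]

lemma delta_one (d : ℕ) (hd : 1 ≤ d) (c : ℕ) : delta d 1 c = (d : ℚ) - c := by
  have h0 : (0 : ℕ) ∈ Finset.range d := Finset.mem_range.mpr hd
  rw [delta_succ]
  rw [Finset.sum_eq_single_of_mem 0 h0 (fun a _ ha => by simp [delta, ha])]
  simp [delta]

lemma sumA1 (d n : ℕ) :
    ∑ a ∈ Finset.range n, (((d : ℚ) - (a : ℚ)))
      = ((1 : ℚ)/2) * (n : ℚ)^1 + ((-1 : ℚ)/2) * (n : ℚ)^2 + (1 : ℚ) * (d : ℚ)^1 * (n : ℚ)^1 := by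
  induction n with
  | zero => simp
  | succ n ih => rw [Finset.sum_range_succ, ih]; push_cast; ring

lemma sumB1 (d n : ℕ) :
    ∑ a ∈ Finset.range n, (((d : ℚ) - (a : ℚ)) * ((d : ℚ) - (a : ℚ)))
      = ((1 : ℚ)/6) * (n : ℚ)^1 + ((-1 : ℚ)/2) * (n : ℚ)^2 + ((1 : ℚ)/3) * (n : ℚ)^3 + (1 : ℚ) * (d : ℚ)^1 * (n : ℚ)^1 + (-1 : ℚ) * (d : ℚ)^1 * (n : ℚ)^2 + (1 : ℚ) * (d : ℚ)^2 * (n : ℚ)^1 := by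
  induction n with
  | zero => simp
  | succ n ih => rw [Finset.sum_range_succ, ih]; push_cast; ring

lemma delta_two (d : ℕ) (hd : 1 ≤ d) (c : ℕ) (hc : c ≤ d) :
    delta d 2 c = ((-1 : ℚ)/6) * (c : ℚ)^1 + ((1 : ℚ)/6) * (c : ℚ)^3 + ((1 : ℚ)/6) * (d : ℚ)^1 + ((-1 : ℚ)/2) * (d : ℚ)^1 * (c : ℚ)^1 + ((-1 : ℚ)/2) * (d : ℚ)^1 * (c : ℚ)^2 + ((1 : ℚ)/2) * (d : ℚ)^2 + ((1 : ℚ)/3) * (d : ℚ)^3 := by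
  rw [show (2 : ℕ) = 1 + 1 from rfl, delta_succ]
  rw [Finset.sum_congr rfl (fun a _ => by rw [delta_one d hd a])]
  rw [delta_split d (fun a => (d : ℚ) - (a : ℚ)) hc, sumA1 d c, sumB1 d d, sumB1 d c]
  ring

lemma sumA2 (d n : ℕ) :
    ∑ a ∈ Finset.range n, ((((-1 : ℚ)/6) * (a : ℚ)^1 + ((1 : ℚ)/6) * (a : ℚ)^3 + ((1 : ℚ)/6) * (d : ℚ)^1 + ((-1 : ℚ)/2) * (d : ℚ)^1 * (a : ℚ)^1 + ((-1 : ℚ)/2) * (d : ℚ)^1 * (a : ℚ)^2 + ((1 : ℚ)/2) * (d : ℚ)^2 + ((1 : ℚ)/3) * (d : ℚ)^3))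
      = ((1 : ℚ)/12) * (n : ℚ)^1 + ((-1 : ℚ)/24) * (n : ℚ)^2 + ((-1 : ℚ)/12) * (n : ℚ)^3 + ((1 : ℚ)/24) * (n : ℚ)^4 + ((1 : ℚ)/3) * (d : ℚ)^1 * (n : ℚ)^1 + ((-1 : ℚ)/6) * (d : ℚ)^1 * (n : ℚ)^3 + ((1 : ℚ)/2) * (d : ℚ)^2 * (n : ℚ)^1 + ((1 : ℚ)/3) * (d : ℚ)^3 * (n : ℚ)^1 := by
  induction n with
  | zero => simp
  | succ n ih => rw [Finset.sum_range_succ, ih]; push_cast; ring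

lemma sumB2 (d n : ℕ) :
    ∑ a ∈ Finset.range n, (((d : ℚ) - (a : ℚ)) * (((-1 : ℚ)/6) * (a : ℚ)^1 + ((1 : ℚ)/6) * (a : ℚ)^3 + ((1 : ℚ)/6) * (d : ℚ)^1 + ((-1 : ℚ)/2) * (d : ℚ)^1 * (a : ℚ)^1 + ((-1 : ℚ)/2) * (d : ℚ)^1 * (a : ℚ)^2 + ((1 : ℚ)/2) * (d : ℚ)^2 + ((1 : ℚ)/3) * (d : ℚ)^3))
      = ((1 : ℚ)/30) * (n : ℚ)^1 + ((-1 : ℚ)/12) * (n : ℚ)^2 + ((1 : ℚ)/12) * (n : ℚ)^4 + ((-1 : ℚ)/30) * (n : ℚ)^5 + ((1 : ℚ)/4) * (d : ℚ)^1 * (n : ℚ)^1 + ((-1 : ℚ)/4) * (d : ℚ)^1 * (n : ℚ)^2 + ((-1 : ℚ)/6) * (d : ℚ)^1 * (n : ℚ)^3 + ((1 : ℚ)/6) * (d : ℚ)^1 * (n : ℚ)^4 + ((7 : ℚ)/12) * (d : ℚ)^2 * (n : ℚ)^1 + ((-1 : ℚ)/4) * (d : ℚ)^2 * (n : ℚ)^2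 + ((-1 : ℚ)/6) * (d : ℚ)^2 * (n : ℚ)^3 + ((2 : ℚ)/3) * (d : ℚ)^3 * (n : ℚ)^1 + ((-1 : ℚ)/6) * (d : ℚ)^3 * (n : ℚ)^2 + ((1 : ℚ)/3) * (d : ℚ)^4 * (n : ℚ)^1 := by
  induction n with
  | zero => simp
  | succ n ih => rw [Finset.sum_range_succ, ih]; push_cast; ring

lemma delta_three (d : ℕ) (hd : 1 ≤ d) (c : ℕ) (hc : c ≤ d) :
    delta d 3 c = ((-1 : ℚ)/30) * (c : ℚ)^1 + ((1 : ℚ)/24) * (c : ℚ)^3 + ((-1 : ℚ)/120) * (c : ℚ)^5 + ((1 : ℚ)/30) * (d : ℚ)^1 + ((-1 : ℚ)/6) * (d : ℚ)^1 * (c : ℚ)^1 + ((-1 : ℚ)/8) * (d : ℚ)^1 * (c : ℚ)^2 + ((1 : ℚ)/12) * (d : ℚ)^1 * (c : ℚ)^3 + ((1 : ℚ)/24) * (d : ℚ)^1 * (c : ℚ)^4 + ((1 : ℚ)/6) * (d : ℚ)^2 + ((-1 : ℚ)/4) * (d : ℚ)^2 * (c : ℚ)^1 + ((-1 : ℚ)/4)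 * (d : ℚ)^2 * (c : ℚ)^2 + ((1 : ℚ)/3) * (d : ℚ)^3 + ((-1 : ℚ)/6) * (d : ℚ)^3 * (c : ℚ)^1 + ((-1 : ℚ)/6) * (d : ℚ)^3 * (c : ℚ)^2 + ((1 : ℚ)/3) * (d : ℚ)^4 + ((2 : ℚ)/15) * (d : ℚ)^5 := by
  rw [show (3 : ℕ) = 2 + 1 from rfl, delta_succ]
  rw [Finset.sum_congr rfl (fun a ha => by
    rw [delta_two d hd a (le_of_lt (Finset.mem_range.mp ha))])]
  rw [delta_split d (fun a => (((-1 : ℚ)/6) * (a : ℚ)^1 + ((1 : ℚ)/6) * (a : ℚ)^3 + ((1 : ℚ)/6) * (d : ℚ)^1 + ((-1 : ℚ)/2) * (d : ℚ)^1 * (a : ℚ)^1 + ((-1 : ℚ)/2) * (d : ℚ)^1 * (a : ℚ)^2 + ((1 : ℚ)/2) * (d : ℚ)^2 + ((1 : ℚ)/3) * (d : ℚ)^3)) hc, sumA2 d c, sumB2 d d, sumB2 d c]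
  ring

lemma sumB3 (d n : ℕ) :
    ∑ a ∈ Finset.range n, (((d : ℚ) - (a : ℚ)) * (((-1 : ℚ)/30) * (a : ℚ)^1 + ((1 : ℚ)/24) * (a : ℚ)^3 + ((-1 : ℚ)/120) * (a : ℚ)^5 + ((1 : ℚ)/30) * (d : ℚ)^1 + ((-1 : ℚ)/6) * (d : ℚ)^1 * (a : ℚ)^1 + ((-1 : ℚ)/8) * (d : ℚ)^1 * (a : ℚ)^2 + ((1 : ℚ)/12) * (d : ℚ)^1 * (a : ℚ)^3 + ((1 : ℚ)/24) * (d : ℚ)^1 * (a : ℚ)^4 + ((1 : ℚ)/6) * (d : ℚ)^2 + ((-1 : ℚ)/4) * (d : ℚ)^2 * (a : ℚ)^1 + ((-1 : ℚ)/4) * (d : ℚ)^2 * (a : ℚ)^2 + ((1 : ℚ)/3) * (d : ℚ)^3 + ((-1 : ℚ)/6) * (d : ℚ)^3 * (a : ℚ)^1 + ((-1 : ℚ)/6) * (d : ℚ)^3 * (a : ℚ)^2 + ((1 : ℚ)/3) * (d : ℚ)^4 + ((2 : ℚ)/15) * (d : ℚ)^5))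
      = ((1 : ℚ)/140) * (n : ℚ)^1 + ((-1 : ℚ)/60) * (n : ℚ)^2 + ((-1 : ℚ)/240) * (n : ℚ)^3 + ((1 : ℚ)/48) * (n : ℚ)^4 + ((-1 : ℚ)/240) * (n : ℚ)^5 + ((-1 : ℚ)/240) * (n : ℚ)^6 + ((1 : ℚ)/840) * (n : ℚ)^7 + ((23 : ℚ)/360) * (d : ℚ)^1 * (n : ℚ)^1 + ((-17 : ℚ)/240) * (d : ℚ)^1 * (n : ℚ)^2 + ((-1 : ℚ)/18) * (d : ℚ)^1 * (n : ℚ)^3 + ((1 : ℚ)/16) * (d : ℚ)^1 * (n : ℚ)^4 + ((1 : ℚ)/120) * (d : ℚ)^1 * (n : ℚ)^5 + ((-1 : ℚ)/120) * (d : ℚ)^1 * (n : ℚ)^6 + ((79 : ℚ)/360) * (d : ℚ)^2 * (n : ℚ)^1 + ((-7 : ℚ)/48) * (d : ℚ)^2 * (n : ℚ)^2 + ((-1 : ℚ)/9) * (d : ℚ)^2 * (n : ℚ)^3 + ((1 : ℚ)/16) * (d : ℚ)^2 * (n : ℚ)^4 + ((1 : ℚ)/120) * (d : ℚ)^2 *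 (n : ℚ)^5 + ((4 : ℚ)/9) * (d : ℚ)^3 * (n : ℚ)^1 + ((-5 : ℚ)/24) * (d : ℚ)^3 * (n : ℚ)^2 + ((-1 : ℚ)/9) * (d : ℚ)^3 * (n : ℚ)^3 + ((1 : ℚ)/24) * (d : ℚ)^3 * (n : ℚ)^4 + ((5 : ℚ)/9) * (d : ℚ)^4 * (n : ℚ)^1 + ((-1 : ℚ)/6) * (d : ℚ)^4 * (n : ℚ)^2 + ((-1 : ℚ)/18) * (d : ℚ)^4 * (n : ℚ)^3 + ((2 : ℚ)/5) * (d : ℚ)^5 * (n : ℚ)^1 + ((-1 : ℚ)/15) * (d : ℚ)^5 * (n : ℚ)^2 + ((2 : ℚ)/15) * (d : ℚ)^6 * (n : ℚ)^1 := by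
  induction n with
  | zero => simp
  | succ n ih => rw [Finset.sum_range_succ, ih]; push_cast; ring

theorem delta_four (d : ℕ) (hd : 1 ≤ d) (p : ℚ) (hp : p = 2 * d + 1) :
    delta d 4 0 = (p - 1) * p * (p + 1) * (17 * p ^ 4 + 31 * p ^ 2 + 24) / 40320 := by
  rw [show (4 : ℕ) = 3 + 1 from rfl, delta_succ]
  rw [Finset.sum_congr rfl (fun a ha => by
    rw [delta_three d hd a (le_of_lt (Finset.mem_range.mp ha))])]
  rw [delta_split d (fun a => (((-1 : ℚ)/30) * (a : ℚ)^1 + ((1 : ℚ)/24) * (a : ℚ)^3 + ((-1 : ℚ)/120) * (a : ℚ)^5 + ((1 : ℚ)/30) * (d : ℚ)^1 + ((-1 : ℚ)/6) * (d : ℚ)^1 * (a : ℚ)^1 + ((-1 : ℚ)/8) * (d : ℚ)^1 * (a : ℚ)^2 + ((1 : ℚ)/12) * (d : ℚ)^1 * (a : ℚ)^3 + ((1 : ℚ)/24) * (d : ℚ)^1 * (a : ℚ)^4 + ((1 : ℚ)/6) * (d : ℚ)^2 + ((-1 : ℚ)/4) * (d : ℚ)^2 * (a : ℚ)^1 + ((-1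 : ℚ)/4) * (d : ℚ)^2 * (a : ℚ)^2 + ((1 : ℚ)/3) * (d : ℚ)^3 + ((-1 : ℚ)/6) * (d : ℚ)^3 * (a : ℚ)^1 + ((-1 : ℚ)/6) * (d : ℚ)^3 * (a : ℚ)^2 + ((1 : ℚ)/3) * (d : ℚ)^4 + ((2 : ℚ)/15) * (d : ℚ)^5)) (Nat.zero_le d), sumB3 d d]
  simp only [Finset.range_zero, Finset.sum_empty]
  rw [hp]
  push_cast
  ring
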